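/- Let n ≥ 2, let S be an n×n irreducible column stochastic matrix, let d ∈ (0, 1], and let A = diag(a₁, …, aₙ) with all aⱼ > 0 and the aⱼ not all equal. Then the spectral radius of ((1−d)I + dS)A satisfies min_j aⱼ < ρ(((1−d)I + dS)A) < max_j aⱼ. -/

import Mathlib

open Matrix

/-- The spectral radius of a real square matrix: the maximum modulus of its complex
eigenvalues. -/
noncomputable def specRad {n : ℕ} (M : Matrix (Fin n) (Fin n) ℝ) : ℝ :=
  sSup ((fun μ => ‖μ‖) '' spectrum ℂ (M.map (fun x => (x : ℂ))))

open scoped ENNReal NNReal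

-- HELPERS --
open scoped ENNReal NNReal


section Helpers

variable {n : ℕ}

/-- entries of powers of entrywise-nonnegative matrices are nonnegative -/
lemma pow_entry_nonneg {M : Matrix (Fin n) (Fin n) ℝ} (hM : ∀ i j, 0 ≤ M i j) (p : ℕ) :
    ∀ i j, 0 ≤ (M ^ p) i j := by
  induction p with
  | zero => intro i j; rw [pow_zero]; by_cases h : i = j <;> simp [Matrix.one_apply, h]
  | succ p ih =>
      intro i j
      rw [pow_succ, Matrix.mul_apply]
      exact Finset.sum_nonneg fun k _ => mul_nonneg (ih i k) (hM k j)

/-- entrywise domination of powers -/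
lemma pow_entry_dom {A B : Matrix (Fin n) (Fin n) ℝ} {e : ℝ} (he : 0 ≤ e)
    (hB : ∀ i j, 0 ≤ B i j) (hle : ∀ i j, e * B i j ≤ A i j) (p : ℕ) :
    ∀ i j, e ^ p * (B ^ p) i j ≤ (A ^ p) i j := by
  induction p with
  | zero => intro i j; simp [pow_zero]
  | succ p ih =>
      intro i j
      have hA : (A ^ (p + 1)) i j = ∑ k, (A ^ p) i k * A k j := by
        rw [pow_succ, Matrix.mul_apply]
      have hBp2 : (B ^ (p + 1)) i j = ∑ k, (B ^ p) i k * B k j := by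
        rw [pow_succ, Matrix.mul_apply]
      rw [hA, hBp2, Finset.mul_sum]
      refine Finset.sum_le_sum fun k _ => ?_
      have h1 : e ^ p * (B ^ p) i k ≤ (A ^ p) i k := ih i k
      have h2 : e * B k j ≤ A k j := hle k j
      have hBp : 0 ≤ e ^ p * (B ^ p) i k :=
        mul_nonneg (pow_nonneg he p) (pow_entry_nonneg hB p i k)
      calc e ^ (p + 1) * ((B ^ p) i k * B k j)
          = (e ^ p * (B ^ p) i k) * (e * B k j) := by ring
        _ ≤ (A ^ p) i k * A k j :=
            mul_le_mul h1 h2 (mul_nonneg he (hB k j)) (le_trans hBp h1)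

lemma colsum_pow_succ (M : Matrix (Fin n) (Fin n) ℝ) (p : ℕ) (j : Fin n) :
    ∑ i, (M ^ (p + 1)) i j = ∑ k, (∑ i, (M ^ p) i k) * M k j := by
  simp_rw [pow_succ, Matrix.mul_apply, Finset.sum_mul]
  exact Finset.sum_comm

/-- column sums of powers are bounded by powers of a column-sum bound -/
lemma colsum_pow_le {M : Matrix (Fin n) (Fin n) ℝ} {c : ℝ} (hM : ∀ i j, 0 ≤ M i j)
    (hc : 0 ≤ c) (h : ∀ j, ∑ i, M i j ≤ c) (p : ℕ) (j : Fin n) :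
    ∑ i, (M ^ p) i j ≤ c ^ p := by
  induction p generalizing j with
  | zero => simp [Matrix.one_apply, Finset.sum_ite_eq]
  | succ p ih =>
      rw [colsum_pow_succ]
      calc ∑ k, (∑ i, (M ^ p) i k) * M k j
          ≤ ∑ k, c ^ p * M k j :=
            Finset.sum_le_sum fun k _ => mul_le_mul_of_nonneg_right (ih k) (hM k j)
        _ = c ^ p * ∑ k, M k j := by rw [Finset.mul_sum]
        _ ≤ c ^ p * c := mul_le_mul_of_nonneg_left (h j) (pow_nonneg hc p)
        _ = c ^ (p + 1) := by ring

lemma colsum_pow_ge {M : Matrix (Fin n) (Fin n) ℝ} {m : ℝ} (hM : ∀ i j, 0 ≤ M i j)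
    (hm : 0 ≤ m) (h : ∀ j, m ≤ ∑ i, M i j) (p : ℕ) (j : Fin n) :
    m ^ p ≤ ∑ i, (M ^ p) i j := by
  induction p generalizing j with
  | zero => simp [Matrix.one_apply, Finset.sum_ite_eq]
  | succ p ih =>
      rw [colsum_pow_succ]
      calc m ^ (p + 1) = m ^ p * m := by ring
        _ ≤ m ^ p * ∑ k, M k j := mul_le_mul_of_nonneg_left (h j) (pow_nonneg hm p)
        _ = ∑ k, m ^ p * M k j := by rw [Finset.mul_sum]
        _ ≤ ∑ k, (∑ i, (M ^ p) i k) * M k j :=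
            Finset.sum_le_sum fun k _ => mul_le_mul_of_nonneg_right (ih k) (hM k j)

/-- strict upper bound on column sums of powers, propagated along positive entries -/
lemma colsum_pow_lt {M : Matrix (Fin n) (Fin n) ℝ} {c : ℝ} (hM : ∀ i j, 0 ≤ M i j)
    (hc : 0 < c) (hcs : ∀ j, ∑ i, M i j ≤ c) {j0 : Fin n} (hj0 : ∑ i, M i j0 < c) (q : ℕ) :
    ∀ p j, 1 ≤ p → 0 < (M ^ q) j0 j → ∑ i, (M ^ (p + q)) i j < c ^ (p + q) := by
  induction q with
  | zero =>
      intro p j hp hpos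
      have hj : j0 = j := by
        by_contra hne
        rw [pow_zero, Matrix.one_apply_ne hne] at hpos
        exact lt_irrefl 0 hpos
      subst hj
      obtain ⟨p', rfl⟩ : ∃ p', p = p' + 1 := ⟨p - 1, by omega⟩
      rw [Nat.add_zero, colsum_pow_succ]
      calc ∑ k, (∑ i, (M ^ p') i k) * M k j0
          ≤ ∑ k, c ^ p' * M k j0 :=
            Finset.sum_le_sum fun k _ =>
              mul_le_mul_of_nonneg_right (colsum_pow_le hM hc.le hcs p' k) (hM k j0)
        _ = c ^ p' * ∑ k, M k j0 := by rw [Finset.mul_sum]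
        _ < c ^ p' * c := by
            exact mul_lt_mul_of_pos_left hj0 (pow_pos hc p')
        _ = c ^ (p' + 1) := by ring
  | succ q ih =>
      intro p j hp hpos
      rw [pow_succ, Matrix.mul_apply] at hpos
      obtain ⟨k, -, hk⟩ : ∃ k ∈ Finset.univ, 0 < (M ^ q) j0 k * M k j := by
        by_contra hcon
        push_neg at hcon
        have : ∑ k, (M ^ q) j0 k * M k j ≤ 0 :=
          Finset.sum_nonpos fun k hk => hcon k hk
        linarith
      have hk1 : 0 < (M ^ q) j0 k := by
        rcases lt_or_ge 0 ((M ^ q) j0 k) with h | h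
        · exact h
        · exfalso
          have := mul_nonpos_of_nonpos_of_nonneg h (hM k j)
          linarith
      have hk2 : 0 < M k j := by
        rcases lt_or_ge 0 (M k j) with h | h
        · exact h
        · exfalso
          have := mul_nonpos_of_nonneg_of_nonpos (pow_entry_nonneg hM q j0 k) h
          linarith
      have hIH : ∑ i, (M ^ (p + q)) i k < c ^ (p + q) := ih p k hp hk1
      have hstep : p + (q + 1) = (p + q) + 1 := by omega
      rw [hstep, colsum_pow_succ]
      calc ∑ k', (∑ i, (M ^ (p + q)) i k') * M k' j
          < ∑ k', c ^ (p + q) * M k' j := by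
            refine Finset.sum_lt_sum (fun k' _ =>
              mul_le_mul_of_nonneg_right (colsum_pow_le hM hc.le hcs _ k') (hM k' j))
              ⟨k, Finset.mem_univ k, mul_lt_mul_of_pos_right hIH hk2⟩
        _ = c ^ (p + q) * ∑ k', M k' j := by rw [Finset.mul_sum]
        _ ≤ c ^ (p + q) * c := mul_le_mul_of_nonneg_left (hcs j) (pow_nonneg hc.le _)
        _ = c ^ ((p + q) + 1) := by ring

/-- strict lower bound on column sums of powers, propagated along positive entries -/
lemma colsum_pow_gt {M : Matrix (Fin n) (Fin n) ℝ} {m : ℝ} (hM : ∀ i j, 0 ≤ M i j)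
    (hm : 0 < m) (hcs : ∀ j, m ≤ ∑ i, M i j) {j0 : Fin n} (hj0 : m < ∑ i, M i j0) (q : ℕ) :
    ∀ p j, 1 ≤ p → 0 < (M ^ q) j0 j → m ^ (p + q) < ∑ i, (M ^ (p + q)) i j := by
  induction q with
  | zero =>
      intro p j hp hpos
      have hj : j0 = j := by
        by_contra hne
        rw [pow_zero, Matrix.one_apply_ne hne] at hpos
        exact lt_irrefl 0 hpos
      subst hj
      obtain ⟨p', rfl⟩ : ∃ p', p = p' + 1 := ⟨p - 1, by omega⟩
      rw [Nat.add_zero, colsum_pow_succ]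
      calc m ^ (p' + 1) = m ^ p' * m := by ring
        _ < m ^ p' * ∑ k, M k j0 := mul_lt_mul_of_pos_left hj0 (pow_pos hm p')
        _ = ∑ k, m ^ p' * M k j0 := by rw [Finset.mul_sum]
        _ ≤ ∑ k, (∑ i, (M ^ p') i k) * M k j0 :=
            Finset.sum_le_sum fun k _ =>
              mul_le_mul_of_nonneg_right (colsum_pow_ge hM hm.le hcs p' k) (hM k j0)
  | succ q ih =>
      intro p j hp hpos
      rw [pow_succ, Matrix.mul_apply] at hpos
      obtain ⟨k, -, hk⟩ : ∃ k ∈ Finset.univ, 0 < (M ^ q) j0 k * M k j := by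
        by_contra hcon
        push_neg at hcon
        have : ∑ k, (M ^ q) j0 k * M k j ≤ 0 :=
          Finset.sum_nonpos fun k hk => hcon k hk
        linarith
      have hk1 : 0 < (M ^ q) j0 k := by
        rcases lt_or_ge 0 ((M ^ q) j0 k) with h | h
        · exact h
        · exfalso
          have := mul_nonpos_of_nonpos_of_nonneg h (hM k j)
          linarith
      have hk2 : 0 < M k j := by
        rcases lt_or_ge 0 (M k j) with h | h
        · exact h
        · exfalso
          have := mul_nonpos_of_nonneg_of_nonpos (pow_entry_nonneg hM q j0 k) h
          linarith
      have hIH : m ^ (p + q) < ∑ i, (M ^ (p + q)) i k := ih p k hp hk1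
      have hstep : p + (q + 1) = (p + q) + 1 := by omega
      rw [hstep, colsum_pow_succ]
      calc m ^ ((p + q) + 1) = m ^ (p + q) * m := by ring
        _ ≤ m ^ (p + q) * ∑ k', M k' j :=
            mul_le_mul_of_nonneg_left (hcs j) (pow_nonneg hm.le _)
        _ = ∑ k', m ^ (p + q) * M k' j := by rw [Finset.mul_sum]
        _ < ∑ k', (∑ i, (M ^ (p + q)) i k') * M k' j := by
            refine Finset.sum_lt_sum (fun k' _ =>
              mul_le_mul_of_nonneg_right (colsum_pow_ge hM hm.le hcs _ k') (hM k' j))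
              ⟨k, Finset.mem_univ k, mul_lt_mul_of_pos_right hIH hk2⟩

end Helpers

section Analytic

variable {n : ℕ}

attribute [local instance] Matrix.linftyOpNormedRing Matrix.linftyOpNormedAlgebra

lemma spectrum_transpose (A : Matrix (Fin n) (Fin n) ℂ) : spectrum ℂ Aᵀ = spectrum ℂ A := by
  ext μ
  have key : (algebraMap ℂ (Matrix (Fin n) (Fin n) ℂ) μ - A)ᵀ
      = algebraMap ℂ (Matrix (Fin n) (Fin n) ℂ) μ - Aᵀ := by
    rw [Algebra.algebraMap_eq_smul_one, Matrix.transpose_sub, Matrix.transpose_smul,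
      Matrix.transpose_one]
  simp only [spectrum.mem_iff, Matrix.isUnit_iff_isUnit_det]
  rw [← key, Matrix.det_transpose]

lemma nnnorm_map_le {P : Matrix (Fin n) (Fin n) ℝ} {t : ℝ} (hP : ∀ i j, 0 ≤ P i j)
    (h : ∀ i, ∑ j, P i j ≤ t) (ht : 0 ≤ t) :
    ‖P.map (fun x => (x : ℂ))‖₊ ≤ t.toNNReal := by
  rw [Matrix.linfty_opNNNorm_def]
  refine Finset.sup_le fun i _ => ?_
  rw [← NNReal.coe_le_coe, NNReal.coe_sum, Real.coe_toNNReal t ht]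
  calc ∑ j, ((‖(P.map (fun x => (x : ℂ))) i j‖₊ : ℝ))
      = ∑ j, P i j := by
        refine Finset.sum_congr rfl fun j _ => ?_
        rw [coe_nnnorm, Matrix.map_apply, Complex.norm_real, Real.norm_eq_abs,
          abs_of_nonneg (hP i j)]
    _ ≤ t := h i

lemma le_nnnorm_map {P : Matrix (Fin n) (Fin n) ℝ} {s : ℝ} (hP : ∀ i j, 0 ≤ P i j)
    (i0 : Fin n) (h : s ≤ ∑ j, P i0 j) :
    s.toNNReal ≤ ‖P.map (fun x => (x : ℂ))‖₊ := by
  rw [Matrix.linfty_opNNNorm_def]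
  refine le_trans ?_ (Finset.le_sup (Finset.mem_univ i0))
  rw [← NNReal.coe_le_coe, NNReal.coe_sum, Real.coe_toNNReal']
  have : ∑ j, ((‖(P.map (fun x => (x : ℂ))) i0 j‖₊ : ℝ)) = ∑ j, P i0 j := by
    refine Finset.sum_congr rfl fun j _ => ?_
    rw [coe_nnnorm, Matrix.map_apply, Complex.norm_real, Real.norm_eq_abs,
      abs_of_nonneg (hP i0 j)]
  rw [this]
  exact max_le h (Finset.sum_nonneg fun j _ => hP i0 j)

lemma specRad_eq_toReal (hn : 0 < n) (M : Matrix (Fin n) (Fin n) ℝ) :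
    specRad M = (spectralRadius ℂ ((Mᵀ).map (fun x => (x : ℂ)))).toReal := by
  haveI : Nonempty (Fin n) := ⟨⟨0, hn⟩⟩
  haveI : CompleteSpace (Matrix (Fin n) (Fin n) ℂ) := FiniteDimensional.complete ℂ _
  set B := (Mᵀ).map (fun x => (x : ℂ)) with hB
  have hBtrans : B = (M.map (fun x => (x : ℂ)))ᵀ := Matrix.transpose_map
  have hspec : spectrum ℂ B = spectrum ℂ (M.map (fun x => (x : ℂ))) := by
    rw [hBtrans, spectrum_transpose]
  have hrtop : spectralRadius ℂ B ≠ ⊤ :=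
    ne_top_of_le_ne_top ENNReal.coe_ne_top (spectrum.spectralRadius_le_nnnorm (𝕜 := ℂ) B)
  obtain ⟨z, hz, hzr⟩ := spectrum.exists_nnnorm_eq_spectralRadius B
  unfold specRad
  rw [← hspec]
  refine IsGreatest.csSup_eq ⟨⟨z, hz, ?_⟩, ?_⟩
  · rw [← hzr, ENNReal.coe_toReal, coe_nnnorm]
  · rintro x ⟨w, hw, rfl⟩
    have hle : (‖w‖₊ : ℝ≥0∞) ≤ spectralRadius ℂ B :=
      le_iSup₂ (f := fun k (_ : k ∈ spectrum ℂ B) => (‖k‖₊ : ℝ≥0∞)) w hw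
    have := ENNReal.toReal_mono hrtop hle
    rwa [ENNReal.coe_toReal, coe_nnnorm] at this

lemma toReal_spectralRadius_le {M : Matrix (Fin n) (Fin n) ℝ} (hn : 0 < n)
    (hM : ∀ i j, 0 ≤ M i j) {N : ℕ} (hN : 0 < N) {c' : ℝ} (hc' : 0 < c')
    (h : ∀ k j, ∑ i, (M ^ (N * k)) i j ≤ c' ^ k) :
    (spectralRadius ℂ ((Mᵀ).map (fun x => (x : ℂ)))).toReal ≤ c' ^ (1 / (N : ℝ)) := by
  haveI : Nonempty (Fin n) := ⟨⟨0, hn⟩⟩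
  haveI : CompleteSpace (Matrix (Fin n) (Fin n) ℂ) := FiniteDimensional.complete ℂ _
  set B := (Mᵀ).map (fun x => (x : ℂ)) with hBdef
  have hBpow : ∀ k : ℕ, B ^ k = ((M ^ k)ᵀ).map (fun x => (x : ℂ)) := by
    intro k
    have : B = (algebraMap ℝ ℂ).mapMatrix Mᵀ := rfl
    rw [this, ← map_pow, Matrix.transpose_pow]
    rfl
  have htends := spectrum.pow_nnnorm_pow_one_div_tendsto_nhds_spectralRadius B
  have hφ : Filter.Tendsto (fun k : ℕ => N * (k + 1)) Filter.atTop Filter.atTop := by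
    apply Filter.tendsto_atTop_atTop_of_monotone
    · intro x y hxy; exact Nat.mul_le_mul_left _ (by omega)
    · intro b
      refine ⟨b, ?_⟩
      calc b ≤ 1 * (b + 1) := by omega
        _ ≤ N * (b + 1) := Nat.mul_le_mul_right _ hN
  have h2 : Filter.Tendsto
      (fun k : ℕ => (‖B ^ (N * (k + 1))‖₊ : ℝ≥0∞) ^ (1 / (N * (k + 1) : ℕ) : ℝ))
      Filter.atTop (nhds (spectralRadius ℂ B)) := htends.comp hφ
  have hbound : ∀ k : ℕ, (‖B ^ (N * (k + 1))‖₊ : ℝ≥0∞) ^ (1 / (N * (k + 1) : ℕ) : ℝ)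
      ≤ ENNReal.ofReal c' ^ (1 / (N : ℝ)) := by
    intro k
    have hnn := pow_entry_nonneg hM (N * (k + 1))
    have h1 : ‖B ^ (N * (k + 1))‖₊ ≤ (c' ^ (k + 1)).toNNReal := by
      rw [hBpow]
      refine nnnorm_map_le (fun i j => hnn j i) (fun i => ?_) (pow_nonneg hc'.le _)
      simpa [Matrix.transpose_apply] using h (k + 1) i
    have h1' : (‖B ^ (N * (k + 1))‖₊ : ℝ≥0∞) ≤ ENNReal.ofReal (c' ^ (k + 1)) := by
      rw [ENNReal.ofReal]
      exact_mod_cast h1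
    calc (‖B ^ (N * (k + 1))‖₊ : ℝ≥0∞) ^ (1 / (N * (k + 1) : ℕ) : ℝ)
        ≤ ENNReal.ofReal (c' ^ (k + 1)) ^ (1 / (N * (k + 1) : ℕ) : ℝ) :=
          ENNReal.rpow_le_rpow h1' (by positivity)
      _ = ENNReal.ofReal c' ^ (1 / (N : ℝ)) := by
          rw [ENNReal.ofReal_pow hc'.le, ← ENNReal.rpow_natCast (ENNReal.ofReal c') (k + 1),
            ← ENNReal.rpow_mul]
          congr 1
          have hNk : ((N * (k + 1) : ℕ) : ℝ) = (N : ℝ) * ((k + 1 : ℕ) : ℝ) := by push_cast; ring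
          rw [hNk]
          have hN' : (N : ℝ) ≠ 0 := Nat.cast_ne_zero.mpr hN.ne'
          have hk' : ((k + 1 : ℕ) : ℝ) ≠ 0 := Nat.cast_ne_zero.mpr (Nat.succ_ne_zero k)
          field_simp
          try ring
  have hr : spectralRadius ℂ B ≤ ENNReal.ofReal c' ^ (1 / (N : ℝ)) :=
    le_of_tendsto h2 (Filter.Eventually.of_forall hbound)
  calc (spectralRadius ℂ B).toReal
      ≤ (ENNReal.ofReal c' ^ (1 / (N : ℝ))).toReal :=
        ENNReal.toReal_mono (ENNReal.rpow_ne_top_of_nonneg (by positivity) ENNReal.ofReal_ne_top) hr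
    _ = c' ^ (1 / (N : ℝ)) := by
        rw [← ENNReal.toReal_rpow, ENNReal.toReal_ofReal hc'.le]

lemma le_toReal_spectralRadius {M : Matrix (Fin n) (Fin n) ℝ} (hn : 0 < n)
    (hM : ∀ i j, 0 ≤ M i j) {N : ℕ} (hN : 0 < N) {m' : ℝ} (hm' : 0 < m')
    (h : ∀ k j, m' ^ k ≤ ∑ i, (M ^ (N * k)) i j) :
    m' ^ (1 / (N : ℝ)) ≤ (spectralRadius ℂ ((Mᵀ).map (fun x => (x : ℂ)))).toReal := by
  haveI : Nonempty (Fin n) := ⟨⟨0, hn⟩⟩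
  haveI : CompleteSpace (Matrix (Fin n) (Fin n) ℂ) := FiniteDimensional.complete ℂ _
  set B := (Mᵀ).map (fun x => (x : ℂ)) with hBdef
  have hBpow : ∀ k : ℕ, B ^ k = ((M ^ k)ᵀ).map (fun x => (x : ℂ)) := by
    intro k
    have : B = (algebraMap ℝ ℂ).mapMatrix Mᵀ := rfl
    rw [this, ← map_pow, Matrix.transpose_pow]
    rfl
  have htends := spectrum.pow_nnnorm_pow_one_div_tendsto_nhds_spectralRadius B
  have hφ : Filter.Tendsto (fun k : ℕ => N * (k + 1)) Filter.atTop Filter.atTop := by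
    apply Filter.tendsto_atTop_atTop_of_monotone
    · intro x y hxy; exact Nat.mul_le_mul_left _ (by omega)
    · intro b
      refine ⟨b, ?_⟩
      calc b ≤ 1 * (b + 1) := by omega
        _ ≤ N * (b + 1) := Nat.mul_le_mul_right _ hN
  have h2 : Filter.Tendsto
      (fun k : ℕ => (‖B ^ (N * (k + 1))‖₊ : ℝ≥0∞) ^ (1 / (N * (k + 1) : ℕ) : ℝ))
      Filter.atTop (nhds (spectralRadius ℂ B)) := htends.comp hφ
  have hbound : ∀ k : ℕ, ENNReal.ofReal m' ^ (1 / (N : ℝ))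
      ≤ (‖B ^ (N * (k + 1))‖₊ : ℝ≥0∞) ^ (1 / (N * (k + 1) : ℕ) : ℝ) := by
    intro k
    have hnn := pow_entry_nonneg hM (N * (k + 1))
    have h1 : (m' ^ (k + 1)).toNNReal ≤ ‖B ^ (N * (k + 1))‖₊ := by
      rw [hBpow]
      refine le_nnnorm_map (fun i j => hnn j i) ⟨0, hn⟩ ?_
      simpa [Matrix.transpose_apply] using h (k + 1) ⟨0, hn⟩
    have h1' : ENNReal.ofReal (m' ^ (k + 1)) ≤ (‖B ^ (N * (k + 1))‖₊ : ℝ≥0∞) := by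
      rw [ENNReal.ofReal]
      exact_mod_cast h1
    calc ENNReal.ofReal m' ^ (1 / (N : ℝ))
        = ENNReal.ofReal (m' ^ (k + 1)) ^ (1 / (N * (k + 1) : ℕ) : ℝ) := by
          rw [ENNReal.ofReal_pow hm'.le, ← ENNReal.rpow_natCast (ENNReal.ofReal m') (k + 1),
            ← ENNReal.rpow_mul]
          congr 1
          have hNk : ((N * (k + 1) : ℕ) : ℝ) = (N : ℝ) * ((k + 1 : ℕ) : ℝ) := by push_cast; ring
          rw [hNk]
          have hN' : (N : ℝ) ≠ 0 := Nat.cast_ne_zero.mpr hN.ne'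
          have hk' : ((k + 1 : ℕ) : ℝ) ≠ 0 := Nat.cast_ne_zero.mpr (Nat.succ_ne_zero k)
          field_simp
          try ring
      _ ≤ (‖B ^ (N * (k + 1))‖₊ : ℝ≥0∞) ^ (1 / (N * (k + 1) : ℕ) : ℝ) :=
          ENNReal.rpow_le_rpow h1' (by positivity)
  have hr : ENNReal.ofReal m' ^ (1 / (N : ℝ)) ≤ spectralRadius ℂ B :=
    ge_of_tendsto h2 (Filter.Eventually.of_forall hbound)
  have hrtop : spectralRadius ℂ B ≠ ⊤ :=
    ne_top_of_le_ne_top ENNReal.coe_ne_top (spectrum.spectralRadius_le_nnnorm (𝕜 := ℂ) B)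
  calc m' ^ (1 / (N : ℝ))
      = (ENNReal.ofReal m' ^ (1 / (N : ℝ))).toReal := by
        rw [← ENNReal.toReal_rpow, ENNReal.toReal_ofReal hm'.le]
    _ ≤ (spectralRadius ℂ B).toReal := ENNReal.toReal_mono hrtop hr

end Analytic


/-- A real square matrix is column stochastic if its entries are nonnegative and each
column sums to one. -/
def ColStochastic {n : ℕ} (S : Matrix (Fin n) (Fin n) ℝ) : Prop :=
  (∀ i j, 0 ≤ S i j) ∧ ∀ j, ∑ i, S i j = 1

/-- A square matrix is irreducible if for every pair of indices `(j,k)` some positive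
power has positive `(j,k)` entry. -/
def MatIrreducible {n : ℕ} (S : Matrix (Fin n) (Fin n) ℝ) : Prop :=
  ∀ j k : Fin n, ∃ p : ℕ, 0 < p ∧ 0 < (S ^ p) j k

/-- If `S` is irreducible column stochastic, `d ∈ (0,1]`, and `A = diag(a₁,…,aₙ)` has
positive, not all equal, diagonal entries, then
`min_j aⱼ < ρ(((1−d)I + dS)A) < max_j aⱼ`. -/
theorem specRad_between_min_max {n : ℕ} (hn : 2 ≤ n)
    (S : Matrix (Fin n) (Fin n) ℝ) (hS : ColStochastic S) (hirr : MatIrreducible S)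
    (d : ℝ) (hd0 : 0 < d) (hd1 : d ≤ 1)
    (a : Fin n → ℝ) (ha : ∀ j, 0 < a j) (hns : ∃ j k, a j ≠ a k) :
    Finset.univ.inf' (Finset.univ_nonempty_iff.mpr ⟨⟨0, by omega⟩⟩) a <
      specRad (((1 - d) • 1 + d • S) * Matrix.diagonal a) ∧
    specRad (((1 - d) • 1 + d • S) * Matrix.diagonal a) <
      Finset.univ.sup' (Finset.univ_nonempty_iff.mpr ⟨⟨0, by omega⟩⟩) a := by
  classical
  haveI : Nonempty (Fin n) := ⟨⟨0, by omega⟩⟩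
  obtain ⟨hSnn, hScol⟩ := hS
  have hne : (Finset.univ : Finset (Fin n)).Nonempty := Finset.univ_nonempty
  set G : Matrix (Fin n) (Fin n) ℝ := (1 - d) • 1 + d • S with hGdef
  set M : Matrix (Fin n) (Fin n) ℝ := G * Matrix.diagonal a with hMdef
  set m : ℝ := Finset.univ.inf' hne a with hm
  set c : ℝ := Finset.univ.sup' hne a with hc
  have hGentry : ∀ i j, G i j = (1 - d) * (if i = j then (1 : ℝ) else 0) + d * S i j := by
    intro i j
    simp [hGdef, Matrix.add_apply, Matrix.smul_apply, Matrix.one_apply, smul_eq_mul]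
  have hMentry : ∀ i j, M i j = G i j * a j := by
    intro i j
    rw [hMdef]
    exact Matrix.mul_diagonal a G i j
  have hGnn : ∀ i j, 0 ≤ G i j := by
    intro i j
    rw [hGentry]
    have h1 : 0 ≤ (if i = j then (1 : ℝ) else 0) := by split <;> norm_num
    have h2 := hSnn i j
    have h3 : 0 ≤ 1 - d := by linarith
    positivity
  have hMnn : ∀ i j, 0 ≤ M i j := fun i j => by
    rw [hMentry]; exact mul_nonneg (hGnn i j) (ha j).le
  have hGcol : ∀ j, ∑ i, G i j = 1 := by
    intro j
    simp_rw [hGentry]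
    rw [Finset.sum_add_distrib, ← Finset.mul_sum, ← Finset.mul_sum, hScol j]
    simp [Finset.sum_ite_eq']
  have hcol : ∀ j, ∑ i, M i j = a j := by
    intro j
    simp_rw [hMentry]
    rw [← Finset.sum_mul, hGcol j, one_mul]
  have hm0 : 0 < m := by
    rw [hm, Finset.lt_inf'_iff]
    exact fun j _ => ha j
  have hmle : ∀ j, m ≤ a j := fun j => Finset.inf'_le _ (Finset.mem_univ j)
  have hlec : ∀ j, a j ≤ c := fun j => Finset.le_sup' _ (Finset.mem_univ j)
  have hmc : m < c := by
    by_contra hcon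
    push_neg at hcon
    obtain ⟨j, k, hjk⟩ := hns
    have hj : a j = m := le_antisymm (le_trans (hlec j) hcon) (hmle j)
    have hk : a k = m := le_antisymm (le_trans (hlec k) hcon) (hmle k)
    exact hjk (hj.trans hk.symm)
  have hcpos : 0 < c := hm0.trans hmc
  have hcsle : ∀ j, ∑ i, M i j ≤ c := fun j => le_of_eq_of_le (hcol j) (hlec j)
  have hcsge : ∀ j, m ≤ ∑ i, M i j := fun j => le_of_le_of_eq (hmle j) (hcol j).symm
  -- irreducibility transfers to M
  have hMdom : ∀ i j, (m * d) * S i j ≤ M i j := by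
    intro i j
    have hit : 0 ≤ (if i = j then (1 : ℝ) else 0) := by split <;> norm_num
    have h1 : d * S i j ≤ G i j := by
      rw [hGentry]
      have h3 : 0 ≤ (1 - d) * (if i = j then (1 : ℝ) else 0) :=
        mul_nonneg (by linarith) hit
      linarith
    have h0 : 0 ≤ d * S i j := mul_nonneg hd0.le (hSnn i j)
    calc (m * d) * S i j = (d * S i j) * m := by ring
      _ ≤ G i j * a j := mul_le_mul h1 (hmle j) hm0.le (le_trans h0 h1)
      _ = M i j := (hMentry i j).symm
  have hirrM : ∀ j k, ∃ p, 0 < p ∧ 0 < (M ^ p) j k := by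
    intro j k
    obtain ⟨p, hp, hSp⟩ := hirr j k
    refine ⟨p, hp, ?_⟩
    have hdom := pow_entry_dom (mul_pos hm0 hd0).le hSnn hMdom p j k
    have hpos : 0 < (m * d) ^ p * (S ^ p) j k :=
      mul_pos (pow_pos (mul_pos hm0 hd0) p) hSp
    linarith
  have hj0 : ∃ j0, a j0 < c := by
    by_contra h
    push_neg at h
    have : c ≤ m := Finset.le_inf' hne a fun j _ => h j
    exact absurd this (not_le.mpr hmc)
  have hj1 : ∃ j1, m < a j1 := by
    by_contra h
    push_neg at h
    have : c ≤ m := Finset.sup'_le hne a fun j _ => h j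
    exact absurd this (not_le.mpr hmc)
  constructor
  · -- lower bound
    obtain ⟨j1, hj1lt⟩ := hj1
    have hj1' : m < ∑ i, M i j1 := lt_of_lt_of_eq hj1lt (hcol j1).symm
    choose q hq0 hqpos using fun j => hirrM j1 j
    set N := Finset.univ.sup q + 1 with hNdef
    have hN1 : 0 < N := Nat.succ_pos _
    have hNdn : ∀ j, m ^ N < ∑ i, (M ^ N) i j := by
      intro j
      have hqj : q j ≤ Finset.univ.sup q := Finset.le_sup (Finset.mem_univ j)
      have hsplit : N = (N - q j) + q j := by omega
      rw [hsplit]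
      exact colsum_pow_gt hMnn hm0 hcsge hj1' (q j) (N - q j) j (by omega) (hqpos j)
    set m' : ℝ := Finset.univ.inf' hne (fun j => ∑ i, (M ^ N) i j) with hm'def
    have hm'gt : m ^ N < m' := by
      rw [hm'def, Finset.lt_inf'_iff]
      exact fun j _ => hNdn j
    have hm'pos : 0 < m' := lt_trans (pow_pos hm0 N) hm'gt
    have hm'lb : ∀ j', m' ≤ ∑ i, (M ^ N) i j' := by
      intro j'
      rw [hm'def]
      exact Finset.inf'_le (fun j => ∑ i, (M ^ N) i j) (Finset.mem_univ j')
    have hbk : ∀ k j, m' ^ k ≤ ∑ i, (M ^ (N * k)) i j := by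
      intro k j
      rw [pow_mul]
      exact colsum_pow_ge (pow_entry_nonneg hMnn N) hm'pos.le hm'lb k j
    have key := le_toReal_spectralRadius (by omega) hMnn hN1 hm'pos hbk
    rw [specRad_eq_toReal (by omega) M]
    refine lt_of_lt_of_le ?_ key
    have hid : ((m ^ N : ℝ)) ^ (1 / (N : ℝ)) = m := by
      rw [← Real.rpow_natCast m N, ← Real.rpow_mul hm0.le, mul_one_div,
        div_self (Nat.cast_ne_zero.mpr hN1.ne'), Real.rpow_one]
    calc m = ((m ^ N : ℝ)) ^ (1 / (N : ℝ)) := hid.symm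
      _ < m' ^ (1 / (N : ℝ)) :=
        Real.rpow_lt_rpow (pow_pos hm0 N).le hm'gt (by positivity)
  · -- upper bound
    obtain ⟨j0, hj0lt⟩ := hj0
    have hj0' : ∑ i, M i j0 < c := lt_of_eq_of_lt (hcol j0) hj0lt
    choose q hq0 hqpos using fun j => hirrM j0 j
    set N := Finset.univ.sup q + 1 with hNdef
    have hN1 : 0 < N := Nat.succ_pos _
    have hNup : ∀ j, ∑ i, (M ^ N) i j < c ^ N := by
      intro j
      have hqj : q j ≤ Finset.univ.sup q := Finset.le_sup (Finset.mem_univ j)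
      have hsplit : N = (N - q j) + q j := by omega
      rw [hsplit]
      exact colsum_pow_lt hMnn hcpos hcsle hj0' (q j) (N - q j) j (by omega) (hqpos j)
    set c' : ℝ := Finset.univ.sup' hne (fun j => ∑ i, (M ^ N) i j) with hc'def
    have hc'ub : ∀ j', ∑ i, (M ^ N) i j' ≤ c' := by
      intro j'
      rw [hc'def]
      exact Finset.le_sup' (fun j => ∑ i, (M ^ N) i j) (Finset.mem_univ j')
    have hc'lt : c' < c ^ N := by
      rw [hc'def, Finset.sup'_lt_iff]
      exact fun j _ => hNup j
    have hc'pos : 0 < c' := by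
      have h1 : (0:ℝ) < m ^ N := pow_pos hm0 N
      have h2 : m ^ N ≤ ∑ i, (M ^ N) i j0 := colsum_pow_ge hMnn hm0.le hcsge N j0
      exact lt_of_lt_of_le h1 (le_trans h2 (hc'ub j0))
    have hbk : ∀ k j, ∑ i, (M ^ (N * k)) i j ≤ c' ^ k := by
      intro k j
      rw [pow_mul]
      exact colsum_pow_le (pow_entry_nonneg hMnn N) hc'pos.le hc'ub k j
    have key := toReal_spectralRadius_le (by omega : 0 < n) hMnn hN1 hc'pos hbk
    rw [specRad_eq_toReal (by omega) M]
    refine lt_of_le_of_lt key ?_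
    have hid : ((c ^ N : ℝ)) ^ (1 / (N : ℝ)) = c := by
      rw [← Real.rpow_natCast c N, ← Real.rpow_mul hcpos.le, mul_one_div,
        div_self (Nat.cast_ne_zero.mpr hN1.ne'), Real.rpow_one]
    calc c' ^ (1 / (N : ℝ)) < ((c ^ N : ℝ)) ^ (1 / (N : ℝ)) :=
        Real.rpow_lt_rpow hc'pos.le hc'lt (by positivity)
      _ = c := hid
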